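/- With f̂_j = G f_j and λ̂_j = ∫_Ω g(x) w_j(x) dx, concavity of the logarithm and Jensen's inequality give l(f, λ) − l(f̂, λ̂) ≥ ∫_Ω g(x) Σ_{j=1}^m w_j(x) log( (λ̂_j (N G f_j)(x)) / (λ_j (N f_j)(x)) ) dx. -/

import Mathlib

open MeasureTheory Filter

noncomputable section

/-- `Euc d` is the Euclidean space `ℝ^d`. -/
abbrev Euc (d : ℕ) : Type := EuclideanSpace ℝ (Fin d)

variable {d m : ℕ}

/-- The nonlinear smoothing operator `(N f)(x) = exp (∫_Ω K_H(x - u) log f(u) du)`. -/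
noncomputable def NOp (Ω : Set (Euc d)) (KH : Euc d → ℝ) (f : Euc d → ℝ) (x : Euc d) : ℝ :=
  Real.exp (∫ u in Ω, KH (x - u) * Real.log (f u))

/-- The linear smoothing operator `(S f)(x) = ∫_Ω K_H(x - u) f(u) du`. -/
noncomputable def SOp (Ω : Set (Euc d)) (KH : Euc d → ℝ) (f : Euc d → ℝ) (x : Euc d) : ℝ :=
  ∫ u in Ω, KH (x - u) * f u

/-- The smoothed mixture `(M_λ N f)(x) = ∑ j, λ_j (N f_j)(x)`. -/
noncomputable def MOp (Ω : Set (Euc d)) (KH : Euc d → ℝ) (lam : Fin m → ℝ)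
    (f : Fin m → Euc d → ℝ) (x : Euc d) : ℝ :=
  ∑ j, lam j * NOp Ω KH (f j) x

/-- The smoothed negative log-likelihood functional
`l(f, λ) = ∫_Ω g(x) log (g(x) / (M_λ N f)(x)) dx`. -/
noncomputable def ell (Ω : Set (Euc d)) (KH g : Euc d → ℝ) (lam : Fin m → ℝ)
    (f : Fin m → Euc d → ℝ) : ℝ :=
  ∫ x in Ω, g x * Real.log (g x / MOp Ω KH lam f x)

/-- The weight functions `w_j(x) = λ_j (N f_j)(x) / (M_λ N f)(x)`. -/
noncomputable def wFun (Ω : Set (Euc d)) (KH : Euc d → ℝ) (lam : Fin m → ℝ)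
    (f : Fin m → Euc d → ℝ) (j : Fin m) (x : Euc d) : ℝ :=
  lam j * NOp Ω KH (f j) x / MOp Ω KH lam f x

/-- The iteration operator
`(G f_j)(x) = α_j ∫_Ω K_H(x - u) g(u) (N f_j)(u) / (M_λ N f)(u) du`. -/
noncomputable def GOp (Ω : Set (Euc d)) (KH g : Euc d → ℝ) (lam : Fin m → ℝ)
    (f : Fin m → Euc d → ℝ) (α : Fin m → ℝ) (j : Fin m) (x : Euc d) : ℝ :=
  α j * ∫ u in Ω, KH (x - u) * g u * NOp Ω KH (f j) u / MOp Ω KH lam f u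

/-- Kullback–Leibler distance between nonnegative functions on `Ω`:
`D(a | b) = ∫_Ω (a log (a / b) + b - a)`. -/
noncomputable def Dkl (Ω : Set (Euc d)) (a b : Euc d → ℝ) : ℝ :=
  ∫ x in Ω, (a x * Real.log (a x / b x) + b x - a x)

/-- concavity of the logarithm and Jensen's inequality give
`l(f, λ) − l(f̂, λ̂) ≥ ∫_Ω g ∑ j, w_j log( λ̂_j (N G f_j) / (λ_j (N f_j)) )`. -/
theorem jensen_lower_bound
    (Ω : Set (Euc d)) (hΩc : IsCompact Ω) (hΩm : MeasurableSet Ω)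
    (KH : Euc d → ℝ) (hKmeas : Measurable KH) (hKnn : ∀ u, 0 ≤ KH u)
    (hKint : ∫ u, KH u = 1)
    (g : Euc d → ℝ) (hgmeas : Measurable g) (hgnn : ∀ x, 0 ≤ g x)
    (hgdens : ∫ x in Ω, g x = 1)
    (lam : Fin m → ℝ) (hlampos : ∀ j, 0 < lam j) (hlamsum : ∑ j, lam j = 1)
    (f : Fin m → Euc d → ℝ) (hfmeas : ∀ j, Measurable (f j))
    (hfpos : ∀ j x, 0 < f j x) (hfdens : ∀ j, ∫ x in Ω, f j x = 1)
    (hflog : ∀ j, IntegrableOn (fun u => Real.log (f j u)) Ω)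
    (α : Fin m → ℝ) (hαpos : ∀ j, 0 < α j)
    (hGnorm : ∀ j, ∫ x in Ω, GOp Ω KH g lam f α j x = 1)
    (hGlog : ∀ j, IntegrableOn (fun u => Real.log (GOp Ω KH g lam f α j u)) Ω)
    (hatlam : Fin m → ℝ)
    (hhatlam : ∀ j, hatlam j = ∫ x in Ω, g x * wFun Ω KH lam f j x)
    (hwint : ∀ j, IntegrableOn (fun x => g x * wFun Ω KH lam f j x) Ω)
    (hI₁ : IntegrableOn (fun x => g x * Real.log (g x / MOp Ω KH lam f x)) Ω)
    (hI₂ : IntegrableOn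
      (fun x => g x * Real.log (g x / MOp Ω KH hatlam (fun j => GOp Ω KH g lam f α j) x)) Ω)
    (hI₃ : IntegrableOn (fun x => g x * ∑ j, wFun Ω KH lam f j x *
      Real.log (hatlam j * NOp Ω KH (GOp Ω KH g lam f α j) x /
        (lam j * NOp Ω KH (f j) x))) Ω) :
    ell Ω KH g lam f - ell Ω KH g hatlam (fun j => GOp Ω KH g lam f α j) ≥
      ∫ x in Ω, g x * ∑ j, wFun Ω KH lam f j x *
        Real.log (hatlam j * NOp Ω KH (GOp Ω KH g lam f α j) x /
          (lam j * NOp Ω KH (f j) x)) := by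
  classical
  set Nf : Fin m → Euc d → ℝ := fun j => NOp Ω KH (f j) with hNfdef
  set Gf : Fin m → Euc d → ℝ := fun j => GOp Ω KH g lam f α j with hGfdef
  set Nh : Fin m → Euc d → ℝ := fun j => NOp Ω KH (Gf j) with hNhdef
  have hm : Nonempty (Fin m) := by
    rcases Nat.eq_zero_or_pos m with h | h
    · subst h; simp at hlamsum
    · exact ⟨⟨0, h⟩⟩
  have hNpos : ∀ j x, 0 < Nf j x := fun j x => Real.exp_pos _
  have hNhpos : ∀ j x, 0 < Nh j x := fun j x => Real.exp_pos _
  have hMpos : ∀ x, 0 < MOp Ω KH lam f x := by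
    intro x
    exact Finset.sum_pos (fun j _ => mul_pos (hlampos j) (hNpos j x)) Finset.univ_nonempty
  have hwpos : ∀ j x, 0 < wFun Ω KH lam f j x := by
    intro j x
    exact div_pos (mul_pos (hlampos j) (hNpos j x)) (hMpos x)
  -- positivity of hatlam
  have hgint : IntegrableOn g Ω := integrable_of_integral_eq_one hgdens
  have hgsupp : 0 < volume (Function.support g ∩ Ω) := by
    have h01 : (0:ℝ) < ∫ x in Ω, g x := by rw [hgdens]; norm_num
    rwa [setIntegral_pos_iff_support_of_nonneg_ae
      (Filter.Eventually.of_forall fun x => hgnn x) hgint] at h01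
  have hhatpos : ∀ j, 0 < hatlam j := by
    intro j
    rw [hhatlam j]
    rw [setIntegral_pos_iff_support_of_nonneg_ae
      (Filter.Eventually.of_forall fun x => mul_nonneg (hgnn x) (hwpos j x).le) (hwint j)]
    refine lt_of_lt_of_le hgsupp (measure_mono ?_)
    intro x hx
    refine ⟨?_, hx.2⟩
    have hgx : g x ≠ 0 := hx.1
    exact mul_ne_zero hgx (hwpos j x).ne'
  have hMhpos : ∀ x, 0 < MOp Ω KH hatlam Gf x := by
    intro x
    exact Finset.sum_pos (fun j _ => mul_pos (hhatpos j) (hNhpos j x)) Finset.univ_nonempty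
  -- pointwise inequality
  have key : ∀ x, g x * ∑ j, wFun Ω KH lam f j x *
      Real.log (hatlam j * Nh j x / (lam j * Nf j x)) ≤
      g x * Real.log (g x / MOp Ω KH lam f x) -
        g x * Real.log (g x / MOp Ω KH hatlam Gf x) := by
    intro x
    rcases eq_or_lt_of_le (hgnn x) with hg | hg
    · simp [← hg]
    · have hjensen : ∑ j, wFun Ω KH lam f j x *
          Real.log (hatlam j * Nh j x / (lam j * Nf j x)) ≤
          Real.log (MOp Ω KH hatlam Gf x) - Real.log (MOp Ω KH lam f x) := by
        have hsum1 : ∑ j, wFun Ω KH lam f j x = 1 := by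
          simp only [wFun, ← Finset.sum_div]
          exact div_self (hMpos x).ne'
        have hJ := strictConcaveOn_log_Ioi.concaveOn.le_map_sum
          (t := Finset.univ) (w := fun j => wFun Ω KH lam f j x)
          (p := fun j => hatlam j * Nh j x / (lam j * Nf j x))
          (fun j _ => (hwpos j x).le) hsum1
          (fun j _ => Set.mem_Ioi.2 (div_pos (mul_pos (hhatpos j) (hNhpos j x))
            (mul_pos (hlampos j) (hNpos j x))))
        simp only [smul_eq_mul] at hJ
        refine hJ.trans_eq ?_
        have hterm : ∀ j, wFun Ω KH lam f j x * (hatlam j * Nh j x / (lam j * Nf j x)) =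
            hatlam j * Nh j x / MOp Ω KH lam f x := by
          intro j
          have h1 : lam j ≠ 0 := (hlampos j).ne'
          have h2 : NOp Ω KH (f j) x ≠ 0 := (hNpos j x).ne'
          have h3 : MOp Ω KH lam f x ≠ 0 := (hMpos x).ne'
          simp only [wFun]
          field_simp
          simp only [hNfdef]
          field_simp
        rw [Finset.sum_congr rfl fun j _ => hterm j, ← Finset.sum_div]
        rw [show ∑ j, hatlam j * Nh j x = MOp Ω KH hatlam Gf x from rfl]
        rw [Real.log_div (hMhpos x).ne' (hMpos x).ne']
      rw [Real.log_div hg.ne' (hMpos x).ne', Real.log_div hg.ne' (hMhpos x).ne']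
      have := mul_le_mul_of_nonneg_left hjensen hg.le
      nlinarith [this]
  -- conclude
  rw [ge_iff_le, ell, ell, ← integral_sub hI₁ hI₂]
  exact setIntegral_mono_on hI₃ (hI₁.sub hI₂) hΩm (fun x _ => key x)
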